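/- arXiv:1709.02337 — 2 statements merged into one kernel-verified Lean document; each statement's English description precedes it below -/
import Mathlib

section
/- Let H be a real Hilbert space, V an open neighborhood of a point u₀, and L ∈ C¹(V, ℝ) whose gradient ∇L has a Gâteaux derivative B(u) ∈ L_s(H) at each u ∈ V, with decomposition B = P + Q where: (a) there are ε > 0 and C₀ > 0 with (P(u)v, v) ≥ C₀‖v‖² for all v ∈ H and u ∈ B(u₀, ε); (b) Q : V → L(H) is continuous at u₀ with Q(u₀) compact. If (uₙ) ⊂ B(u₀, ε') for sufficiently small ε' ≤ ε satisfies ∇L(uₙ) → 0 and ‖Q(u) − Q(u₀)‖ < C₀/2 for all u ∈ B(u₀, ε'), then (uₙ) has a strongly convergent subsequence. -/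
open Filter Topology

local notation "⟪" x ", " y "⟫" => @inner ℝ _ _ x y

set_option maxHeartbeats 1000000 in
/-- Let `L ∈ C¹(V,ℝ)` on a neighborhood `V` of `u₀` in a real Hilbert space,
whose gradient has a Gâteaux derivative `B(u) = P(u) + Q(u)` at each `u ∈ V`, with
`(P(u)v,v) ≥ C₀‖v‖²` on `B(u₀,ε)` and `Q` continuous at `u₀` with `Q(u₀)` compact.
If `(uₙ) ⊂ B(u₀,ε')` (`ε' ≤ ε`) satisfies `∇L(uₙ) → 0` and `‖Q(u) − Q(u₀)‖ < C₀/2`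
on `B(u₀,ε')`, then `(uₙ)` has a strongly convergent subsequence. -/
theorem stmt_9 {H : Type*} [NormedAddCommGroup H] [InnerProductSpace ℝ H] [CompleteSpace H]
    (V : Set H) (hV : IsOpen V) (u₀ : H) (hu₀ : u₀ ∈ V)
    (L : H → ℝ) (gradL : H → H)
    (hL : ∀ u ∈ V, HasGradientAt L (gradL u) u) (hLcont : ContinuousOn gradL V)
    (B P Q : H → H →L[ℝ] H)
    (hBsa : ∀ u ∈ V, IsSelfAdjoint (B u))
    (hGateaux : ∀ u ∈ V, ∀ v : H,
      Tendsto (fun t : ℝ => t⁻¹ • (gradL (u + t • v) - gradL u)) (𝓝[≠] (0 : ℝ)) (𝓝 (B u v)))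
    (hdec : ∀ u ∈ V, B u = P u + Q u)
    (ε C₀ : ℝ) (hε : 0 < ε) (hball : Metric.ball u₀ ε ⊆ V) (hC₀ : 0 < C₀)
    (hPpos : ∀ u ∈ Metric.ball u₀ ε, ∀ v : H, C₀ * ‖v‖ ^ 2 ≤ ⟪P u v, v⟫)
    (hQcomp : IsCompactOperator ⇑(Q u₀)) (hQcont : ContinuousAt Q u₀)
    (ε' : ℝ) (hε' : 0 < ε') (hε'ε : ε' ≤ ε)
    (hQnear : ∀ u ∈ Metric.ball u₀ ε', ‖Q u - Q u₀‖ < C₀ / 2)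
    (u : ℕ → H) (hu : ∀ n, u n ∈ Metric.ball u₀ ε')
    (hgrad : Tendsto (fun n => gradL (u n)) atTop (𝓝 0)) :
    ∃ φ : ℕ → ℕ, StrictMono φ ∧ ∃ w : H, Tendsto (u ∘ φ) atTop (𝓝 w) := by
  -- ball ε' is inside ball ε and inside V
  have hsub : Metric.ball u₀ ε' ⊆ Metric.ball u₀ ε := Metric.ball_subset_ball hε'ε
  have hsubV : Metric.ball u₀ ε' ⊆ V := hsub.trans hball
  -- Key inequality via the mean value theorem
  have key : ∀ x ∈ Metric.ball u₀ ε', ∀ y ∈ Metric.ball u₀ ε',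
      C₀ / 2 * ‖y - x‖ ^ 2 ≤ ⟪gradL y - gradL x, y - x⟫ - ⟪Q u₀ (y - x), y - x⟫ := by
    intro x hx y hy
    set v : H := y - x with hv
    -- the path stays in the ball
    have hpath : ∀ s : ℝ, s ∈ Set.Icc (0:ℝ) 1 → x + s • v ∈ Metric.ball u₀ ε' := fun s hs =>
      (convex_ball u₀ ε').add_smul_sub_mem hx hy hs
    -- derivative of s ↦ ⟪gradL (x + s•v), v⟫
    have hderiv : ∀ s : ℝ, s ∈ Set.Icc (0:ℝ) 1 →
        HasDerivAt (fun s : ℝ => ⟪gradL (x + s • v), v⟫) ⟪B (x + s • v) v, v⟫ s := by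
      intro s hs
      have hmem : x + s • v ∈ V := hsubV (hpath s hs)
      have h1 : HasDerivAt (fun s : ℝ => gradL (x + s • v)) (B (x + s • v) v) s := by
        rw [hasDerivAt_iff_tendsto_slope_zero]
        have := hGateaux (x + s • v) hmem v
        convert this using 2 with t
        rw [add_smul, add_assoc]
      have h2 := h1.inner ℝ (hasDerivAt_const s v)
      simpa using h2
    have hcont : ContinuousOn (fun s : ℝ => ⟪gradL (x + s • v), v⟫) (Set.Icc (0:ℝ) 1) :=
      fun s hs => (hderiv s hs).continuousAt.continuousWithinAt
    obtain ⟨c, hc, hceq⟩ := exists_hasDerivAt_eq_slope (fun s : ℝ => ⟪gradL (x + s • v), v⟫)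
      (fun s => ⟪B (x + s • v) v, v⟫) one_pos hcont
      (fun s hs => hderiv s (Set.mem_Icc_of_Ioo hs))
    have hcc : (c:ℝ) ∈ Set.Icc (0:ℝ) 1 := Set.mem_Icc_of_Ioo hc
    set ξ : H := x + c • v with hξ
    have hξball : ξ ∈ Metric.ball u₀ ε' := hpath c hcc
    have hξV : ξ ∈ V := hsubV hξball
    have heq : ⟪B ξ v, v⟫ = ⟪gradL y - gradL x, v⟫ := by
      have := hceq
      simp only [one_smul, zero_smul, add_zero, sub_zero, div_one] at this
      rw [this, hv]
      rw [show x + (y - x) = y by abel]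
      rw [inner_sub_left]
    have hBsplit : ⟪B ξ v, v⟫ = ⟪P ξ v, v⟫ + ⟪(Q ξ - Q u₀) v, v⟫ + ⟪Q u₀ v, v⟫ := by
      rw [hdec ξ hξV]
      simp only [ContinuousLinearMap.add_apply, ContinuousLinearMap.sub_apply, inner_add_left,
        inner_sub_left]
      ring
    have hP : C₀ * ‖v‖ ^ 2 ≤ ⟪P ξ v, v⟫ := hPpos ξ (hsub hξball) v
    have hQ : |⟪(Q ξ - Q u₀) v, v⟫| ≤ C₀ / 2 * ‖v‖ ^ 2 := by
      calc |⟪(Q ξ - Q u₀) v, v⟫| ≤ ‖(Q ξ - Q u₀) v‖ * ‖v‖ := abs_real_inner_le_norm _ _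
        _ ≤ (‖Q ξ - Q u₀‖ * ‖v‖) * ‖v‖ := by
            gcongr; exact (Q ξ - Q u₀).le_opNorm v
        _ ≤ (C₀ / 2 * ‖v‖) * ‖v‖ := by
            gcongr; exact (hQnear ξ hξball).le
        _ = C₀ / 2 * ‖v‖ ^ 2 := by ring
    have habs := abs_le.1 hQ
    nlinarith [heq, hBsplit, hP, habs.1]
  -- extract a subsequence along which Q u₀ (u n) converges
  have hbdd : Bornology.IsBounded (Set.range fun n => u n) := by
    apply Metric.isBounded_ball.subset
    rintro _ ⟨n, rfl⟩
    exact hu n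
  have hKcomp : IsCompact (closure ((Q u₀) '' Set.range fun n => u n)) :=
    hQcomp.isCompact_closure_image_of_bounded hbdd
  have hmemK : ∀ n, Q u₀ (u n) ∈ closure ((Q u₀) '' Set.range fun n => u n) :=
    fun n => subset_closure ⟨u n, ⟨n, rfl⟩, rfl⟩
  obtain ⟨a, -, φ, hφ, hQconv⟩ := hKcomp.tendsto_subseq hmemK
  refine ⟨φ, hφ, ?_⟩
  -- show u ∘ φ is Cauchy
  have hgradφ : Tendsto (fun n => gradL (u (φ n))) atTop (𝓝 0) :=
    hgrad.comp hφ.tendsto_atTop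
  have hcauchy : CauchySeq (u ∘ φ) := by
    rw [Metric.cauchySeq_iff]
    intro δ hδ
    set η : ℝ := C₀ * δ ^ 2 / (24 * ε') with hη
    clear_value η
    have hηpos : 0 < η := by rw [hη]; positivity
    have hη6 : 24 * ε' * η = C₀ * δ ^ 2 := by
      rw [hη]; field_simp
    have h1 : ∀ᶠ n in atTop, ‖gradL (u (φ n))‖ < η := by
      have h : Tendsto (fun n => ‖gradL (u (φ n))‖) atTop (𝓝 0) := by
        simpa using hgradφ.norm
      exact Filter.Tendsto.eventually_lt_const hηpos h
    have h2 : ∀ᶠ (p : ℕ × ℕ) in atTop, ‖Q u₀ (u (φ p.1)) - Q u₀ (u (φ p.2))‖ < η := by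
      have hcq : CauchySeq (fun n => Q u₀ (u (φ n))) := hQconv.cauchySeq
      rw [Metric.cauchySeq_iff] at hcq
      obtain ⟨N, hN⟩ := hcq η hηpos
      filter_upwards [Filter.eventually_atTop.2 ⟨(N, N), fun p hp => hp⟩] with p hp
      have := hN p.1 hp.1 p.2 hp.2
      rwa [dist_eq_norm] at this
    obtain ⟨N₁, hN₁⟩ := Filter.eventually_atTop.1 h1
    obtain ⟨N₂, hN₂⟩ := Filter.eventually_atTop.1 h2
    refine ⟨max N₁ (max N₂.1 N₂.2), fun m hm n hn => ?_⟩
    -- apply the key inequality to x = u (φ n), y = u (φ m)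
    have hx := hu (φ n)
    have hy := hu (φ m)
    have hk := key (u (φ n)) hx (u (φ m)) hy
    set d : H := u (φ m) - u (φ n) with hd
    clear_value d
    have hdle : ‖d‖ ≤ 2 * ε' := by
      have h1' : dist (u (φ m)) u₀ < ε' := Metric.mem_ball.1 hy
      have h2' : dist (u (φ n)) u₀ < ε' := Metric.mem_ball.1 hx
      have : dist (u (φ m)) (u (φ n)) ≤ dist (u (φ m)) u₀ + dist u₀ (u (φ n)) :=
        dist_triangle _ _ _
      rw [dist_comm u₀] at this
      have h3 : dist (u (φ m)) u₀ + dist (u (φ n)) u₀ ≤ 2 * ε' := by linarith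
      have h4 := this.trans h3
      rw [dist_eq_norm] at h4
      rw [hd]
      exact h4
    have hgm : ‖gradL (u (φ m))‖ < η := hN₁ m (le_trans (le_max_left _ _) hm)
    have hgn : ‖gradL (u (φ n))‖ < η := hN₁ n (le_trans (le_max_left _ _) hn)
    have hqq : ‖Q u₀ (u (φ m)) - Q u₀ (u (φ n))‖ < η := by
      exact hN₂ (m, n) ⟨le_trans (le_trans (le_max_left _ _) (le_max_right N₁ _)) hm,
        le_trans (le_trans (le_max_right _ _) (le_max_right N₁ _)) hn⟩
    -- bound the two inner products
    have hb1 : ⟪gradL (u (φ m)) - gradL (u (φ n)), d⟫ ≤ 2 * η * ‖d‖ := by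
      calc ⟪gradL (u (φ m)) - gradL (u (φ n)), d⟫
          ≤ ‖gradL (u (φ m)) - gradL (u (φ n))‖ * ‖d‖ := real_inner_le_norm _ _
        _ ≤ (‖gradL (u (φ m))‖ + ‖gradL (u (φ n))‖) * ‖d‖ := by
            gcongr; exact norm_sub_le _ _
        _ ≤ 2 * η * ‖d‖ := by nlinarith [norm_nonneg d]
    have hb2 : -⟪Q u₀ d, d⟫ ≤ η * ‖d‖ := by
      have hmap : Q u₀ d = Q u₀ (u (φ m)) - Q u₀ (u (φ n)) := by
        rw [hd, map_sub]
      have := abs_real_inner_le_norm (Q u₀ d) d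
      have hle : ‖Q u₀ d‖ < η := by rw [hmap]; exact hqq
      have habs := abs_le.1 this
      nlinarith [norm_nonneg d, norm_nonneg (Q u₀ d)]
    have hsq : C₀ / 2 * ‖d‖ ^ 2 ≤ 3 * η * ‖d‖ := by
      linarith [hk, hb1, hb2]
    have hstep : 3 * η * ‖d‖ ≤ 6 * η * ε' := by nlinarith [hηpos, hdle]
    have hfin : C₀ * ‖d‖ ^ 2 ≤ C₀ * δ ^ 2 / 2 := by linarith [hsq, hstep, hη6]
    have hdsq : ‖d‖ ^ 2 < δ ^ 2 := by nlinarith [hδ, hC₀, mul_pos hC₀ (pow_pos hδ 2)]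
    have : ‖d‖ < δ := by
      nlinarith [norm_nonneg d, hdsq, hδ]
    rw [dist_eq_norm]
    show ‖u (φ m) - u (φ n)‖ < δ
    rw [← hd]
    exact this
  obtain ⟨w, hw⟩ := cauchySeq_tendsto_of_complete hcauchy
  exact ⟨w, hw⟩
end

section
/- Let H be a real Hilbert space with orthogonal decomposition H = H⁺ ⊕ H⁻ (both closed), a₀, a₁ > 0, and L a C¹ functional on a ball around 0 whose gradient is Gâteaux differentiable with derivative B(w) satisfying, for all w in the ball: (B(w)u, u) ≥ a₁‖u‖² for u ∈ H⁺, (B(w)u, u) ≤ −a₀‖u‖² for u ∈ H⁻, and |(B(w)u, v)| ≤ (min{a₀,a₁}/2)‖u‖·‖v‖ for u ∈ H⁺, v ∈ H⁻. If u, u' in the ball satisfy (I)∇L(u) = ∇L(u') with ‖(u−u')⁺‖ ≥ ‖(u−u')⁻‖, then u = u'; i.e., ∇L is injective on the ball under the stated dominance condition on components. More precisely: (∇L(u) − ∇L(u'), (u−u')⁺) ≥ (a₁/2)‖(u−u')⁺‖², so ∇L(u) = ∇L(u') and ‖(u−u')⁺‖ ≥ ‖(u−u')⁻‖ force (u−u')⁺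 = 0, and symmetrically (u−u')⁻ = 0. -/
open Filter Topology

local notation "⟪" x ", " y "⟫" => @inner ℝ _ _ x y

/-- Let `H = H⁺ ⊕ H⁻` be an orthogonal decomposition of a real Hilbert space,
`a₀, a₁ > 0`, and `L` a `C¹` functional on a ball around 0 whose gradient has Gâteaux
derivative `B(w)` satisfying `(B(w)u,u) ≥ a₁‖u‖²` on `H⁺`, `(B(w)u,u) ≤ −a₀‖u‖²` on `H⁻`,
and `|(B(w)u,v)| ≤ (min{a₀,a₁}/2)‖u‖‖v‖` for `u ∈ H⁺`, `v ∈ H⁻`. If `u, u'` in the ball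
satisfy `∇L(u) = ∇L(u')` and `‖(u−u')⁻‖ ≤ ‖(u−u')⁺‖`, then `u = u'`. -/
theorem stmt_17 {H : Type*} [NormedAddCommGroup H] [InnerProductSpace ℝ H] [CompleteSpace H]
    (Hp : Submodule ℝ H) [Hp.HasOrthogonalProjection]
    (a₀ a₁ r : ℝ) (ha₀ : 0 < a₀) (ha₁ : 0 < a₁) (hr : 0 < r)
    (L : H → ℝ) (gradL : H → H) (B : H → H →L[ℝ] H)
    (hL : ∀ w ∈ Metric.ball (0 : H) r, HasGradientAt L (gradL w) w)
    (hBsa : ∀ w ∈ Metric.ball (0 : H) r, IsSelfAdjoint (B w))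
    (hGateaux : ∀ w ∈ Metric.ball (0 : H) r, ∀ v : H,
      Tendsto (fun t : ℝ => t⁻¹ • (gradL (w + t • v) - gradL w)) (𝓝[≠] (0 : ℝ)) (𝓝 (B w v)))
    (hpos : ∀ w ∈ Metric.ball (0 : H) r, ∀ u ∈ Hp, a₁ * ‖u‖ ^ 2 ≤ ⟪B w u, u⟫)
    (hneg : ∀ w ∈ Metric.ball (0 : H) r, ∀ u ∈ Hpᗮ, ⟪B w u, u⟫ ≤ -(a₀ * ‖u‖ ^ 2))
    (hmix : ∀ w ∈ Metric.ball (0 : H) r, ∀ u ∈ Hp, ∀ v ∈ Hpᗮ,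
      |⟪B w u, v⟫| ≤ min a₀ a₁ / 2 * (‖u‖ * ‖v‖)) :
    ∀ u ∈ Metric.ball (0 : H) r, ∀ u' ∈ Metric.ball (0 : H) r,
      gradL u = gradL u' →
      ‖(u - u') - (Hp.orthogonalProjectionOnto (u - u') : H)‖ ≤
        ‖(Hp.orthogonalProjectionOnto (u - u') : H)‖ →
      u = u' := by
  intro u hu u' hu' hgrad hnorm
  set h : H := u - u' with hh
  set hp : H := (Hp.orthogonalProjectionOnto h : H) with hhp
  set hm : H := h - hp with hhm
  have hp_mem : hp ∈ Hp := (Hp.orthogonalProjectionOnto h).2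
  have hm_mem : hm ∈ Hpᗮ := Submodule.sub_starProjection_mem_orthogonal (K := Hp) h
  -- segment points in ball
  have hseg : ∀ t ∈ Set.Icc (0:ℝ) 1, u' + t • h ∈ Metric.ball (0 : H) r := by
    intro t ht
    simpa using (convex_ball (0:H) r).add_smul_sub_mem hu' hu ht
  -- derivative of g t = ⟪gradL (u' + t • h), hp⟫
  set g : ℝ → ℝ := fun t => ⟪gradL (u' + t • h), hp⟫ with hg
  have hderiv : ∀ t ∈ Set.Icc (0:ℝ) 1,
      HasDerivAt g ⟪B (u' + t • h) h, hp⟫ t := by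
    intro t ht
    set w : H := u' + t • h with hw
    have hwball := hseg t ht
    have hψ : HasDerivAt (fun τ : ℝ => gradL (w + τ • h)) (B w h) 0 := by
      rw [hasDerivAt_iff_tendsto_slope]
      have : (slope (fun τ : ℝ => gradL (w + τ • h)) 0)
          = fun τ : ℝ => τ⁻¹ • (gradL (w + τ • h) - gradL w) := by
        funext τ
        simp [slope_def_module]
      rw [this]
      exact hGateaux w hwball h
    have hφ : HasDerivAt (fun s : ℝ => gradL (u' + s • h)) (B w h) t := by
      have hlin : HasDerivAt (fun s : ℝ => s - t) 1 t := (hasDerivAt_id t).sub_const t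
      have hψ' : HasDerivAt (fun τ : ℝ => gradL (w + τ • h)) (B w h) (t - t) := by
        rwa [sub_self]
      have := HasDerivAt.scomp (h := fun s : ℝ => s - t) t hψ' hlin
      simp only [one_smul] at this
      have heq : ((fun τ : ℝ => gradL (w + τ • h)) ∘ fun s => s - t)
          = fun s : ℝ => gradL (u' + s • h) := by
        funext s
        simp only [Function.comp_apply]
        congr 1
        rw [hw]; module
      rwa [heq] at this
    have := hφ.inner ℝ (hasDerivAt_const t hp)
    simpa using this
  -- mean value theorem
  obtain ⟨c, hc, hceq⟩ := exists_hasDerivAt_eq_slope g (fun t => ⟪B (u' + t • h) h, hp⟫)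
    (by norm_num) (fun t ht => (hderiv t ht).continuousAt.continuousWithinAt)
    (fun t ht => hderiv t (Set.mem_Icc_of_Ioo ht))
  have hg1 : g 1 = g 0 := by
    have e1 : u' + (1:ℝ) • h = u := by rw [hh]; module
    have e0 : u' + (0:ℝ) • h = u' := by module
    simp only [hg, e1, e0, hgrad]
  have hzero : ⟪B (u' + c • h) h, hp⟫ = 0 := by
    rw [hceq, hg1]; simp
  set ξ : H := u' + c • h with hξ
  have hξball : ξ ∈ Metric.ball (0 : H) r := hseg c (Set.mem_Icc_of_Ioo hc)
  -- split
  have hsplit : ⟪B ξ h, hp⟫ = ⟪B ξ hp, hp⟫ + ⟪B ξ hm, hp⟫ := by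
    have : h = hp + hm := by rw [hhm]; abel
    rw [this, map_add, inner_add_left]
  have hsym : ⟪B ξ hm, hp⟫ = ⟪B ξ hp, hm⟫ := by
    have hS := (ContinuousLinearMap.isSelfAdjoint_iff_isSymmetric.mp (hBsa ξ hξball))
    calc ⟪B ξ hm, hp⟫ = ⟪hm, B ξ hp⟫ := hS hm hp
      _ = ⟪B ξ hp, hm⟫ := real_inner_comm _ _
  have hbd : |⟪B ξ hp, hm⟫| ≤ min a₀ a₁ / 2 * (‖hp‖ * ‖hm‖) := hmix ξ hξball hp hp_mem hm hm_mem
  have hposξ : a₁ * ‖hp‖ ^ 2 ≤ ⟪B ξ hp, hp⟫ := hpos ξ hξball hp hp_mem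
  have hmin : min a₀ a₁ ≤ a₁ := min_le_right _ _
  have hmin0 : 0 < min a₀ a₁ := lt_min ha₀ ha₁
  have hnp : (0:ℝ) ≤ ‖hp‖ := norm_nonneg _
  have habs : ⟪B ξ hp, hm⟫ ≥ -(min a₀ a₁ / 2 * (‖hp‖ * ‖hm‖)) := neg_le_of_abs_le hbd
  have h1 : ‖hp‖ * ‖hm‖ ≤ ‖hp‖ * ‖hp‖ := mul_le_mul_of_nonneg_left hnorm hnp
  have h2 : min a₀ a₁ / 2 * (‖hp‖ * ‖hm‖) ≤ a₁ / 2 * (‖hp‖ * ‖hp‖) := by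
    nlinarith [mul_nonneg hnp (norm_nonneg hm)]
  have hsq : ‖hp‖ ^ 2 = 0 := le_antisymm (by nlinarith) (sq_nonneg _)
  have hpnorm : ‖hp‖ = 0 := by
    have := pow_eq_zero_iff (n := 2) (by norm_num) |>.mp hsq
    exact this
  have hp0 : hp = 0 := norm_eq_zero.mp hpnorm
  have hm0 : hm = 0 := norm_eq_zero.mp (le_antisymm (by rw [← hpnorm]; exact hnorm) (norm_nonneg _))
  have : h = 0 := by rw [hhm] at hm0; rw [hp0] at hm0; simpa using hm0
  exact sub_eq_zero.mp this
end
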